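/- Let A be a commutative ring and let A[[T]]_sr be the A-submodule of A[[T]] generated by 1 and by finite products of series of the form L^a T^b/(1 − L^a T^b) with a ∈ ℤ, b ∈ ℤ_{>0}, where L is an invertible element of A. Then there exists a unique A-linear map lim_{T→∞} : A[[T]]_sr → A sending each such product ∏_i L^{a_i}T^{b_i}/(1 − L^{a_i}T^{b_i}) to (−1)^(number of factors) and sending 1 to 1. -/

import Mathlib

open PowerSeries

/-- The power series `L^a T^b / (1 - L^a T^b) = ∑_{m ≥ 1} L^{a m} T^{b m}`,
for a unit `L` of `A`, `a ∈ ℤ` and `b ∈ ℤ_{>0}`. -/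
noncomputable def geomFrac {A : Type*} [CommRing A] (L : Aˣ) (a : ℤ) (b : ℕ+) :
    PowerSeries A :=
  PowerSeries.mk fun n => if (b : ℕ) ∣ n ∧ n ≠ 0 then ((L ^ (a * (n / (b : ℕ) : ℕ)) : Aˣ) : A) else 0

/-- The `A`-submodule `A[[T]]_sr` of `A[[T]]` generated by `1` and by finite
products of series of the form `L^a T^b / (1 - L^a T^b)`. -/
noncomputable def srSubmodule (A : Type*) [CommRing A] (L : Aˣ) :
    Submodule A (PowerSeries A) :=
  Submodule.span A
    ({1} ∪ {F | ∃ s : Multiset (ℤ × ℕ+), s ≠ 0 ∧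
        F = (s.map fun p => geomFrac L p.1 p.2).prod})

namespace SRLimit

open HahnSeries

variable {A : Type*} [CommRing A] (L : Aˣ)

/-! ### The key power series identity -/

theorem geomFrac_mul (a : ℤ) (b : ℕ+) :
    geomFrac L a b * (1 - PowerSeries.C ((L ^ a : Aˣ) : A) * X ^ (b : ℕ)) =
      PowerSeries.C ((L ^ a : Aˣ) : A) * X ^ (b : ℕ) := by
  set c : A := ((L ^ a : Aˣ) : A) with hc
  ext n
  rw [mul_sub, mul_one, map_sub]
  rw [show geomFrac L a b * (PowerSeries.C c * X ^ (b : ℕ))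
      = PowerSeries.C c * (geomFrac L a b * X ^ (b : ℕ)) by ring]
  rw [PowerSeries.coeff_C_mul, PowerSeries.coeff_mul_X_pow', PowerSeries.coeff_C_mul,
    PowerSeries.coeff_X_pow]
  simp only [geomFrac, PowerSeries.coeff_mk]
  rcases eq_or_ne n 0 with rfl | hn0
  · have : ¬ ((b : ℕ) ≤ 0) := by simpa using b.pos
    simp [this, b.pos.ne', (b.pos.ne' : (b:ℕ) ≠ 0).symm]
  rcases eq_or_ne n (b : ℕ) with rfl | hnb
  · simp [Nat.div_self b.pos, b.pos.ne', hn0, hc]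
  by_cases hdvd : (b : ℕ) ∣ n
  · obtain ⟨m, rfl⟩ := hdvd
    have hb : 0 < (b : ℕ) := b.pos
    have hm1 : m ≠ 0 := by rintro rfl; simp at hn0
    have hm2 : m ≠ 1 := by rintro rfl; simp at hnb
    have hble : (b : ℕ) ≤ (b : ℕ) * m :=
      Nat.le_mul_of_pos_right _ (Nat.pos_of_ne_zero hm1)
    have hsub : (b : ℕ) * m - (b : ℕ) = (b : ℕ) * (m - 1) := by
      rw [Nat.mul_sub, mul_one]
    have hdvd' : (b : ℕ) ∣ (b : ℕ) * m - (b : ℕ) := hsub ▸ Dvd.intro _ rfl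
    have hnb0 : (b : ℕ) * m - (b : ℕ) ≠ 0 := by
      rw [hsub]
      exact Nat.mul_ne_zero hb.ne' (by omega)
    have hdiv1 : ((b : ℕ) * m) / (b : ℕ) = m := Nat.mul_div_cancel_left _ hb
    have hdiv2 : ((b : ℕ) * m - (b : ℕ)) / (b : ℕ) = m - 1 := by
      rw [hsub, Nat.mul_div_cancel_left _ hb]
    rw [if_pos ⟨Dvd.intro _ rfl, hn0⟩, if_pos hble, if_pos ⟨hdvd', hnb0⟩,
      if_neg (fun h : (b:ℕ)*m = (b:ℕ) => hnb h), hdiv1, hdiv2]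
    have : L ^ (a * (m : ℤ)) = L ^ a * L ^ (a * ((m - 1 : ℕ) : ℤ)) := by
      rw [← zpow_add]
      congr 1
      have : ((m - 1 : ℕ) : ℤ) = (m : ℤ) - 1 := by
        have := Nat.one_le_iff_ne_zero.mpr hm1
        push_cast [this]; ring
      rw [this]; ring
    rw [this, Units.val_mul, hc]
    ring
  · have h2 : ¬ ((b:ℕ) ∣ n ∧ n ≠ 0) := fun h => hdvd h.1
    rw [if_neg h2, if_neg (fun h : n = (b:ℕ) => hdvd (h ▸ dvd_rfl))]
    by_cases hle : (b : ℕ) ≤ n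
    · have : ¬ ((b:ℕ) ∣ n - (b:ℕ) ∧ n - (b:ℕ) ≠ 0) := by
        rintro ⟨hd, -⟩
        exact hdvd (by simpa [Nat.sub_add_cancel hle] using Nat.dvd_add hd (dvd_refl (b:ℕ)))
      rw [if_pos hle, if_neg this]
      ring
    · rw [if_neg hle]; ring

/-! ### Laurent series auxiliaries -/

noncomputable def hps (a : ℤ) (b : ℕ+) : PowerSeries A :=
  1 - PowerSeries.C ((L ^ (-a) : Aˣ) : A) * X ^ (b : ℕ)

theorem hps_const (a : ℤ) (b : ℕ+) : constantCoeff (hps L a b) = 1 := by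
  simp [hps, b.pos.ne', zero_pow, (b.pos.ne' : (b:ℕ) ≠ 0)]

noncomputable def yps (a : ℤ) (b : ℕ+) : PowerSeries A :=
  -((hps L a b).invOfUnit 1)

theorem yps_const (a : ℤ) (b : ℕ+) : constantCoeff (yps L a b) = -1 := by
  simp [yps, PowerSeries.constantCoeff_invOfUnit]

theorem hps_mul_inv (a : ℤ) (b : ℕ+) :
    hps L a b * (hps L a b).invOfUnit 1 = 1 :=
  PowerSeries.mul_invOfUnit _ _ (by simp [hps_const])

theorem laurent_key (a : ℤ) (b : ℕ+) :
    (1 - single (-(b : ℕ) : ℤ) ((L ^ a : Aˣ) : A)) * (ofPowerSeries ℤ A (yps L a b))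
      = single (-(b : ℕ) : ℤ) ((L ^ a : Aˣ) : A) := by
  set c : A := ((L ^ a : Aˣ) : A) with hc
  set c' : A := ((L ^ (-a) : Aˣ) : A) with hc'
  have hcc' : c * c' = 1 := by
    rw [hc, hc', ← Units.val_mul, ← zpow_add]; simp
  set P : LaurentSeries A := single (-(b : ℕ) : ℤ) c with hP
  set Q : LaurentSeries A := single ((b : ℕ) : ℤ) c' with hQ
  have hPQ : P * Q = 1 := by
    rw [hP, hQ, single_mul_single, neg_add_cancel, hcc', single_zero_one]
  have hQP : Q * P = 1 := by rw [mul_comm]; exact hPQ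
  set I : LaurentSeries A := ofPowerSeries ℤ A ((hps L a b).invOfUnit 1) with hI
  have hW : ofPowerSeries ℤ A (hps L a b) = 1 - Q := by
    rw [hps, map_sub, map_one, map_mul, ofPowerSeries_C, ofPowerSeries_X_pow]
    congr 1
    rw [hQ, HahnSeries.C_apply, single_mul_single, zero_add, mul_one]
  have hWI : (1 - Q) * I = 1 := by
    rw [← hW, hI, ← map_mul, hps_mul_inv, map_one]
  have hY' : ofPowerSeries ℤ A (yps L a b) = -I := by
    rw [yps, map_neg, hI]
  rw [hY']
  set Z : LaurentSeries A := (1 - P) * (-I) - P with hZ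
  have hZQ : Z * Q = 0 := by
    rw [hZ]
    linear_combination (I - 1) * hPQ + hWI
  have hZ0 : Z = 0 := by
    calc Z = Z * Q * P := by rw [mul_assoc, hQP, mul_one]
    _ = 0 := by rw [hZQ, zero_mul]
  rw [hZ] at hZ0
  linear_combination hZ0

theorem laurent_unit (a : ℤ) (b : ℕ+) :
    IsUnit (1 - single (-(b : ℕ) : ℤ) ((L ^ a : Aˣ) : A) : LaurentSeries A) := by
  set c : A := ((L ^ a : Aˣ) : A) with hc
  set c' : A := ((L ^ (-a) : Aˣ) : A) with hc'
  refine IsUnit.of_mul_eq_one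
    ((-(single ((b : ℕ) : ℤ) c')) * ofPowerSeries ℤ A ((hps L a b).invOfUnit 1)) ?_
  have hcc' : c * c' = 1 := by
    rw [hc, hc', ← Units.val_mul, ← zpow_add]; simp
  have hPQ : (single (-(b : ℕ) : ℤ) c : LaurentSeries A) * single ((b : ℕ) : ℤ) c' = 1 := by
    rw [single_mul_single, neg_add_cancel, hcc', single_zero_one]
  have hW : ofPowerSeries ℤ A (hps L a b) = 1 - single ((b : ℕ) : ℤ) c' := by
    rw [hps, map_sub, map_one, map_mul, ofPowerSeries_C, ofPowerSeries_X_pow]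
    congr 1
    rw [HahnSeries.C_apply, single_mul_single, zero_add, mul_one]
  have h1 : (1 - single (-(b : ℕ) : ℤ) c) * (-(single ((b : ℕ) : ℤ) c' : LaurentSeries A))
      = 1 - single ((b : ℕ) : ℤ) c' := by
    linear_combination hPQ
  rw [← mul_assoc, h1, ← hW, ← map_mul, hps_mul_inv, map_one]

/-! ### The localized polynomial ring and the two embeddings -/

noncomputable def dpoly (a : ℤ) (b : ℕ+) : Polynomial A :=
  1 - Polynomial.C ((L ^ a : Aˣ) : A) * Polynomial.X ^ (b : ℕ)

noncomputable def npoly (a : ℤ) (b : ℕ+) : Polynomial A :=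
  Polynomial.C ((L ^ a : Aˣ) : A) * Polynomial.X ^ (b : ℕ)

noncomputable def SM : Submonoid (Polynomial A) :=
  Submonoid.closure (Set.range fun p : ℤ × ℕ+ => dpoly L p.1 p.2)

/-- The map `A[X] → A[[T]]` as an `A`-algebra map. -/
noncomputable def psA : Polynomial A →ₐ[A] PowerSeries A :=
  { Polynomial.coeToPowerSeries.ringHom with
    commutes' := fun r => by
      simp [Polynomial.coeToPowerSeries.ringHom, Polynomial.algebraMap_eq,
        PowerSeries.algebraMap_apply] }

theorem psA_apply (p : Polynomial A) : psA p = (p : PowerSeries A) := rfl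

theorem psA_inj : Function.Injective (psA (A := A)) := Polynomial.coe_injective A

/-- Evaluation at `U⁻¹` : the map `A[X] → A((U))`. -/
noncomputable def lsA : Polynomial A →ₐ[A] LaurentSeries A :=
  Polynomial.aeval (single (-1 : ℤ) (1 : A))

theorem psA_dpoly (a : ℤ) (b : ℕ+) :
    psA (dpoly L a b) = 1 - PowerSeries.C ((L ^ a : Aˣ) : A) * X ^ (b : ℕ) := by
  simp [psA_apply, dpoly]

theorem psA_npoly (a : ℤ) (b : ℕ+) :
    psA (npoly L a b) = PowerSeries.C ((L ^ a : Aˣ) : A) * X ^ (b : ℕ) := by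
  simp [psA_apply, npoly]

theorem lsA_single_pow (b : ℕ+) :
    (single (-1 : ℤ) (1 : A)) ^ (b : ℕ) = single (-(b : ℕ) : ℤ) (1 : A) := by
  rw [single_pow, one_pow]
  congr 1
  push_cast [nsmul_eq_mul]
  ring

theorem lsA_dpoly (a : ℤ) (b : ℕ+) :
    lsA (dpoly L a b) = 1 - single (-(b : ℕ) : ℤ) ((L ^ a : Aˣ) : A) := by
  rw [dpoly, map_sub, map_one, map_mul, map_pow]
  simp only [lsA, Polynomial.aeval_C, Polynomial.aeval_X]
  rw [lsA_single_pow, HahnSeries.algebraMap_apply', PowerSeries.algebraMap_apply,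
    Algebra.algebraMap_self, RingHom.id_apply, ofPowerSeries_C,
    HahnSeries.C_apply, single_mul_single, zero_add, mul_one]

theorem lsA_npoly (a : ℤ) (b : ℕ+) :
    lsA (npoly L a b) = single (-(b : ℕ) : ℤ) ((L ^ a : Aˣ) : A) := by
  rw [npoly, map_mul, map_pow]
  simp only [lsA, Polynomial.aeval_C, Polynomial.aeval_X]
  rw [lsA_single_pow, HahnSeries.algebraMap_apply', PowerSeries.algebraMap_apply,
    Algebra.algebraMap_self, RingHom.id_apply, ofPowerSeries_C,
    HahnSeries.C_apply, single_mul_single, zero_add, mul_one]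

theorem psA_unit : ∀ y : (SM L), IsUnit (psA (y : Polynomial A)) := by
  rintro ⟨y, hy⟩
  refine Submonoid.closure_induction ?_ ?_ ?_ hy
  · rintro x ⟨⟨a, b⟩, rfl⟩
    rw [psA_dpoly, PowerSeries.isUnit_iff_constantCoeff]
    simp [b.pos.ne', (b.pos.ne' : (b:ℕ) ≠ 0)]
  · rw [map_one]; exact isUnit_one
  · intro x y _ _ hx hy
    rw [map_mul]; exact hx.mul hy

theorem lsA_unit : ∀ y : (SM L), IsUnit (lsA (y : Polynomial A)) := by
  rintro ⟨y, hy⟩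
  refine Submonoid.closure_induction ?_ ?_ ?_ hy
  · rintro x ⟨⟨a, b⟩, rfl⟩
    rw [lsA_dpoly]
    exact laurent_unit L a b
  · rw [map_one]; exact isUnit_one
  · intro x y _ _ hx hy
    rw [map_mul]; exact hx.mul hy

noncomputable abbrev Loc := Localization (SM L)

noncomputable def iT : Loc L →ₐ[A] PowerSeries A :=
  IsLocalization.liftAlgHom (M := SM L) (f := psA) (psA_unit L)

noncomputable def iU : Loc L →ₐ[A] LaurentSeries A :=
  IsLocalization.liftAlgHom (M := SM L) (f := lsA) (lsA_unit L)

theorem iT_inj : Function.Injective (iT L) := by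
  rw [injective_iff_map_eq_zero]
  intro z hz
  obtain ⟨⟨x, y⟩, rfl⟩ := IsLocalization.mk'_surjective (SM L) z
  rw [iT, IsLocalization.liftAlgHom_apply] at hz
  have h : psA x = psA (y : Polynomial A) * 0 :=
    (IsLocalization.lift_mk'_spec _ _ _ _).mp hz
  rw [mul_zero] at h
  have hx : x = 0 := psA_inj (by rw [h, map_zero])
  rw [hx]; exact IsLocalization.mk'_zero y

noncomputable def elem (a : ℤ) (b : ℕ+) : Loc L :=
  IsLocalization.mk' (Loc L) (npoly L a b)
    (⟨dpoly L a b, Submonoid.subset_closure ⟨(a, b), rfl⟩⟩ : SM L)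

theorem iT_elem (a : ℤ) (b : ℕ+) : iT L (elem L a b) = geomFrac L a b := by
  show IsLocalization.lift (psA_unit L) _ = _
  rw [elem, IsLocalization.lift_mk'_spec]
  show psA (npoly L a b) = psA (dpoly L a b) * geomFrac L a b
  rw [psA_npoly, psA_dpoly]
  linear_combination -(geomFrac_mul L a b)

theorem iU_elem (a : ℤ) (b : ℕ+) : iU L (elem L a b) = ofPowerSeries ℤ A (yps L a b) := by
  show IsLocalization.lift (lsA_unit L) _ = _
  rw [elem, IsLocalization.lift_mk'_spec]
  show lsA (npoly L a b) = lsA (dpoly L a b) * ofPowerSeries ℤ A (yps L a b)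
  rw [lsA_npoly, lsA_dpoly]
  exact (laurent_key L a b).symm

noncomputable def elemProd (s : Multiset (ℤ × ℕ+)) : Loc L :=
  (s.map fun p => elem L p.1 p.2).prod

theorem iT_elemProd (s : Multiset (ℤ × ℕ+)) :
    iT L (elemProd L s) = (s.map fun p => geomFrac L p.1 p.2).prod := by
  rw [elemProd, map_multiset_prod, Multiset.map_map]
  congr 1
  exact Multiset.map_congr rfl fun p _ => iT_elem L p.1 p.2

theorem iU_elemProd (s : Multiset (ℤ × ℕ+)) :
    iU L (elemProd L s) = ofPowerSeries ℤ A ((s.map fun p => yps L p.1 p.2).prod) := by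
  rw [elemProd, map_multiset_prod, Multiset.map_map, map_multiset_prod, Multiset.map_map]
  congr 1
  exact Multiset.map_congr rfl fun p _ => iU_elem L p.1 p.2

/-! ### The limit map -/

noncomputable def coeff0 : LaurentSeries A →ₗ[A] A where
  toFun f := f.coeff 0
  map_add' := by intros; simp
  map_smul' := by intros; simp

theorem sr_le_range : srSubmodule A L ≤ LinearMap.range (iT L).toLinearMap := by
  rw [srSubmodule, Submodule.span_le]
  rintro x (rfl | ⟨s, -, rfl⟩)
  · exact ⟨1, map_one (iT L)⟩
  · exact ⟨elemProd L s, iT_elemProd L s⟩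

noncomputable def eqv : Loc L ≃ₗ[A] LinearMap.range (iT L).toLinearMap :=
  LinearEquiv.ofInjective (iT L).toLinearMap (iT_inj L)

noncomputable def philim : srSubmodule A L →ₗ[A] A where
  toFun x := coeff0 (iU L ((eqv L).symm (Submodule.inclusion (sr_le_range L) x)))
  map_add' x y := by simp only [map_add]
  map_smul' c x := by
    simp only [map_smul, RingHom.id_apply]
    rw [Algebra.smul_def, map_mul, AlgHom.commutes]
    rw [HahnSeries.algebraMap_apply', PowerSeries.algebraMap_apply,
      Algebra.algebraMap_self, RingHom.id_apply, HahnSeries.ofPowerSeries_C,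
      HahnSeries.C_mul_eq_smul]
    exact map_smul coeff0 c _

theorem philim_eval (x : srSubmodule A L) (z : Loc L)
    (h : (x : PowerSeries A) = iT L z) :
    philim L x = (iU L z).coeff 0 := by
  have h1 : Submodule.inclusion (sr_le_range L) x = eqv L z := by
    apply Subtype.ext
    show (x : PowerSeries A) = _
    have h2 : ((eqv L z : LinearMap.range (iT L).toLinearMap) : PowerSeries A) = iT L z :=
      LinearEquiv.ofInjective_apply (iT L).toLinearMap z
    rw [h, ← h2]
  show coeff0 ((iU L) ((eqv L).symm (Submodule.inclusion (sr_le_range L) x))) = _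
  rw [h1, LinearEquiv.symm_apply_apply]
  rfl

theorem philim_one (x : srSubmodule A L) (h : (x : PowerSeries A) = 1) :
    philim L x = 1 := by
  rw [philim_eval L x 1 (by rw [h, map_one]), map_one]
  simp [HahnSeries.coeff_one]

theorem philim_prod (x : srSubmodule A L) (s : Multiset (ℤ × ℕ+))
    (h : (x : PowerSeries A) = (s.map fun p => geomFrac L p.1 p.2).prod) :
    philim L x = (-1 : A) ^ (Multiset.card s) := by
  rw [philim_eval L x (elemProd L s) (by rw [h, iT_elemProd]), iU_elemProd]
  rw [show ((ofPowerSeries ℤ A ((s.map fun p => yps L p.1 p.2).prod)).coeff 0)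
      = PowerSeries.coeff 0 ((s.map fun p => yps L p.1 p.2).prod) from
    ofPowerSeries_apply_coeff _ 0]
  rw [PowerSeries.coeff_zero_eq_constantCoeff, map_multiset_prod, Multiset.map_map]
  have : (s.map fun p => constantCoeff (yps L p.1 p.2)).prod
      = (s.map fun _ => (-1 : A)).prod := by
    congr 1
    exact Multiset.map_congr rfl fun p _ => yps_const L p.1 p.2
  rw [show ((Multiset.map ((constantCoeff) ∘ fun p : ℤ × ℕ+ => yps L p.1 p.2) s)).prod
      = (s.map fun p => constantCoeff (yps L p.1 p.2)).prod from rfl, this,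
    Multiset.map_const', Multiset.prod_replicate]

end SRLimit

/-- There is a unique `A`-linear map `lim_{T→∞} : A[[T]]_sr → A` sending `1` to
`1` and each finite product `∏_i L^{a_i} T^{b_i} / (1 - L^{a_i} T^{b_i})` to
`(-1)^(number of factors)`. -/
theorem limit_existsUnique {A : Type*} [CommRing A] (L : Aˣ) :
    ∃! φ : (srSubmodule A L) →ₗ[A] A,
      (∀ x : srSubmodule A L, (x : PowerSeries A) = 1 → φ x = 1) ∧
      (∀ x : srSubmodule A L, ∀ s : Multiset (ℤ × ℕ+), s ≠ 0 →
        (x : PowerSeries A) = (s.map fun p => geomFrac L p.1 p.2).prod →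
        φ x = (-1 : A) ^ (Multiset.card s)) := by
  refine ⟨SRLimit.philim L, ⟨fun x h => SRLimit.philim_one L x h,
    fun x s _ h => SRLimit.philim_prod L x s h⟩, ?_⟩
  rintro ψ ⟨h1, h2⟩
  ext x
  obtain ⟨v, hv⟩ := x
  refine Submodule.span_induction
    (p := fun v hv => ψ ⟨v, hv⟩ = SRLimit.philim L ⟨v, hv⟩) ?_ ?_ ?_ ?_ hv
  · rintro w (rfl | ⟨s, hs, rfl⟩)
    · exact (h1 _ rfl).trans (SRLimit.philim_one L _ rfl).symm
    · exact (h2 _ s hs rfl).trans (SRLimit.philim_prod L _ s rfl).symm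
  · show ψ 0 = SRLimit.philim L 0
    rw [map_zero, map_zero]
  · intro u w hu hw ihu ihw
    show ψ (⟨u, hu⟩ + ⟨w, hw⟩) = SRLimit.philim L (⟨u, hu⟩ + ⟨w, hw⟩)
    rw [map_add, map_add, ihu, ihw]
  · intro c u hu ihu
    show ψ (c • (⟨u, hu⟩ : srSubmodule A L)) = SRLimit.philim L (c • (⟨u, hu⟩ : srSubmodule A L))
    rw [map_smul, map_smul, ihu]
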